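/- Let n ≥ 1 and let ε₁ ≤ … ≤ εₙ be positive reals. Let M be a Markov kernel from (Fin n → ℝ) to ℝ satisfying heterogeneous ε-differential privacy: for every index i, every pair of datasets x, x' ∈ [−1/2, 1/2]ⁿ that agree in all coordinates except possibly the i-th, and every measurable set S ⊆ ℝ, M(x)(S) ≤ e^{εᵢ} · M(x')(S). Then the worst-case mean-squared error of M is lower bounded: sup over probability measures P on ℝ with P([−1/2,1/2]) = 1 of ∫_{x ∼ Pⁿ} ∫_{y ∼ M(x)} (y − μ_P)² ≥ (1/512) · min{ H(ε), 1/4 }, where μ_P = ∫ t dP(t) and H(ε) = max_{0 ≤ i ≤ n} 1/((Σ_{j=1}^i ε_j)² + n − i). -/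

import Mathlib

open Finset Real

lemma mlb_sum_prod_bool {n : ℕ} (f : Fin n → Bool → ℝ) :
    ∑ b : Fin n → Bool, ∏ j, f j (b j) = ∏ j, (f j true + f j false) := by
  rw [← Fintype.piFinset_univ, ← Finset.prod_univ_sum]
  exact Finset.prod_congr rfl fun j _ => Fintype.sum_bool (f j)

lemma mlb_key_tel {n i : ℕ} (hi : i ≤ n) (ε : ℕ → ℝ)
    {p q δ : ℝ} (hp0 : 0 ≤ p) (hq0 : 0 ≤ q) (hpq : p + q = 1) (hpq2 : p - q = 2*δ)
    (hδ0 : 0 ≤ δ)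
    (u : (Fin n → Bool) → ℝ)
    (hstep : ∀ (K : Fin n), (K : ℕ) < i → ∀ b : Fin n → Bool,
      u b - u (fun j => if j = K then !b j else b j) ≤ ε K)
    (v : ℕ → (Fin n → Bool) → ℝ)
    (hv : v = fun k b => ∏ j : Fin n,
      (if (j : ℕ) < k then (if b j then q else p) else (if b j then p else q))) :
    ∑ b : Fin n → Bool, (v 0 b - v i b) * u b ≤ 2*δ*(∑ j ∈ Finset.range i, ε j) := by
  have hstep2 : ∀ k, k < i → ∑ b : Fin n → Bool, (v k b - v (k+1) b) * u b ≤ 2*δ*ε k := by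
    intro k hk
    have hkn : k < n := lt_of_lt_of_le hk hi
    set K : Fin n := ⟨k, hkn⟩ with hK
    set ρ : (Fin n → Bool) → ℝ := fun b =>
      ∏ j ∈ univ.erase K, (if (j : ℕ) < k then (if b j then q else p) else (if b j then p else q))
      with hρ
    set φ : (Fin n → Bool) → (Fin n → Bool) := fun b j => if j = K then !b j else b j with hφ
    have hφφ : ∀ b, φ (φ b) = b := by
      intro b; funext j; simp only [hφ]; by_cases h : j = K <;> simp [h]
    have hφK : ∀ b, φ b K = !b K := by intro b; simp [hφ]
    have hρφ : ∀ b, ρ (φ b) = ρ b := by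
      intro b
      apply Finset.prod_congr rfl
      intro j hj
      have hjK : j ≠ K := (Finset.mem_erase.mp hj).1
      simp [hφ, hjK]
    have hρnn : ∀ b, 0 ≤ ρ b := by
      intro b; apply Finset.prod_nonneg; intro j _; split_ifs <;> assumption
    have hvk : ∀ b, v k b = (if b K then p else q) * ρ b := by
      intro b
      simp only [hv, hρ]
      rw [← Finset.mul_prod_erase univ _ (mem_univ K)]
      congr 1
      have : ¬ ((K : ℕ) < k) := by simp [hK]
      simp [this]
    have hvk1 : ∀ b, v (k+1) b = (if b K then q else p) * ρ b := by
      intro b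
      simp only [hv, hρ]
      rw [← Finset.mul_prod_erase univ _ (mem_univ K)]
      congr 1
      · have : (K : ℕ) < k + 1 := by simp [hK]
        simp [this]
      · apply Finset.prod_congr rfl
        intro j hj
        have hjK : j ≠ K := (Finset.mem_erase.mp hj).1
        have hjk : (j : ℕ) ≠ k := by
          intro h; exact hjK (Fin.ext (by simp [hK, h]))
        have hiff : ((j:ℕ) < k + 1) ↔ ((j:ℕ) < k) :=
          ⟨fun h => lt_of_le_of_ne (Nat.lt_succ_iff.mp h) hjk, fun h => Nat.lt_succ_of_lt h⟩
        simp only [hiff]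
    have hsum1 : ∑ b ∈ univ.filter (fun b : Fin n → Bool => b K = true), ρ b = 1 := by
      rw [Finset.sum_filter]
      have hrw : ∀ b : Fin n → Bool, (if b K = true then ρ b else 0)
          = ∏ j : Fin n, (fun j t => if j = K then (if t then (1:ℝ) else 0)
              else (if (j : ℕ) < k then (if t then q else p) else (if t then p else q))) j (b j) := by
        intro b
        rw [← Finset.mul_prod_erase univ _ (mem_univ K)]
        have herase : ∏ j ∈ univ.erase K, (fun j t => if j = K then (if t then (1:ℝ) else 0)
              else (if (j : ℕ) < k then (if t then q else p) else (if t then p else q))) j (b j) = ρ b := by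
          apply Finset.prod_congr rfl
          intro j hj
          have hjK : j ≠ K := (Finset.mem_erase.mp hj).1
          simp [hjK]
        rw [herase]
        by_cases h : b K = true <;> simp [h]
      rw [Finset.sum_congr rfl (fun b _ => hrw b),
        mlb_sum_prod_bool (fun j t => if j = K then (if t then (1:ℝ) else 0)
              else (if (j : ℕ) < k then (if t then q else p) else (if t then p else q)))]
      apply Finset.prod_eq_one
      intro j _
      by_cases h : j = K
      · simp [h]
      · simp only [h, if_false]
        by_cases hjk2 : (j:ℕ) < k <;> simp [hjk2] <;> linarith
    have hsplit : ∑ b : Fin n → Bool, (v k b - v (k+1) b) * u b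
        = ∑ b ∈ univ.filter (fun b : Fin n → Bool => b K = true),
            (2*δ) * (ρ b * (u b - u (φ b))) := by
      rw [← Finset.sum_filter_add_sum_filter_not univ (fun b : Fin n → Bool => b K = true)]
      have h2 : ∑ b ∈ univ.filter (fun b : Fin n → Bool => ¬ b K = true), (v k b - v (k+1) b) * u b
          = ∑ b ∈ univ.filter (fun b : Fin n → Bool => b K = true), (-(2*δ)) * (ρ b * u (φ b)) := by
        apply Finset.sum_nbij' (i := φ) (j := φ)
        · intro a ha
          simp only [Finset.mem_filter, Finset.mem_univ, true_and] at ha ⊢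
          simp [hφK, ha]
        · intro a ha
          simp only [Finset.mem_filter, Finset.mem_univ, true_and] at ha ⊢
          simp [hφK, ha]
        · intro a _; exact hφφ a
        · intro a _; exact hφφ a
        · intro a ha
          simp only [Finset.mem_filter, Finset.mem_univ, true_and] at ha
          have haK : a K = false := by simpa using ha
          rw [hvk, hvk1, hρφ, hφφ, haK]
          simp only [if_false, Bool.false_eq_true]
          linear_combination (-(ρ a * u a)) * hpq2
      rw [h2, ← Finset.sum_add_distrib]
      apply Finset.sum_congr rfl
      intro b hb
      have hbK : b K = true := (Finset.mem_filter.mp hb).2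
      rw [hvk, hvk1, hbK]
      simp only [if_true]
      linear_combination (ρ b * u b) * hpq2
    rw [hsplit]
    calc ∑ b ∈ univ.filter (fun b : Fin n → Bool => b K = true),
            (2*δ) * (ρ b * (u b - u (φ b)))
        ≤ ∑ b ∈ univ.filter (fun b : Fin n → Bool => b K = true), (2*δ) * (ρ b * ε k) := by
          apply Finset.sum_le_sum
          intro b _
          have h1 : u b - u (φ b) ≤ ε k := hstep K hk b
          have h2 : ρ b * (u b - u (φ b)) ≤ ρ b * ε k :=
            mul_le_mul_of_nonneg_left h1 (hρnn b)
          exact mul_le_mul_of_nonneg_left h2 (by linarith)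
      _ = 2*δ*ε k := by
          have : ∀ b ∈ univ.filter (fun b : Fin n → Bool => b K = true),
              (2*δ) * (ρ b * ε k) = (2*δ*ε k) * ρ b := by intro b _; ring
          rw [Finset.sum_congr rfl this, ← Finset.mul_sum, hsum1, mul_one]
  calc ∑ b : Fin n → Bool, (v 0 b - v i b) * u b
      = ∑ k ∈ Finset.range i, ∑ b : Fin n → Bool, (v k b - v (k+1) b) * u b := by
        rw [Finset.sum_comm]
        apply Finset.sum_congr rfl
        intro b _
        rw [← Finset.sum_mul, Finset.sum_range_sub' (fun k => v k b) i]
    _ ≤ ∑ k ∈ Finset.range i, 2*δ*ε k := by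
        apply Finset.sum_le_sum
        intro k hk
        exact hstep2 k (Finset.mem_range.mp hk)
    _ = 2*δ*(∑ j ∈ Finset.range i, ε j) := by rw [Finset.mul_sum]

set_option maxHeartbeats 1000000 in
lemma mlb_key_cs {n i : ℕ} (hi : i ≤ n)
    {p q δ : ℝ} (hp0 : 0 ≤ p) (hq0 : 0 ≤ q) (hpq : p + q = 1) (hpq2 : p - q = 2*δ)
    (hδ0 : 0 ≤ δ)
    (u : (Fin n → Bool) → ℝ) (hu0 : ∀ b, 0 ≤ u b) (hu1 : ∀ b, u b ≤ 1)
    (v : ℕ → (Fin n → Bool) → ℝ)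
    (hv : v = fun k b => ∏ j : Fin n,
      (if (j : ℕ) < k then (if b j then q else p) else (if b j then p else q))) :
    ∑ b : Fin n → Bool, (v i b - v n b) * u b ≤ 2*δ*Real.sqrt ((n - i : ℕ)) := by
  have hpe : p = 1/2 + δ := by linarith
  have hqe : q = 1/2 - δ := by linarith
  have hvnn : ∀ k b, 0 ≤ v k b := by
    intro k b; rw [hv]; apply Finset.prod_nonneg; intro j _; split_ifs <;> assumption
  have hvsum : ∀ k, ∑ b : Fin n → Bool, v k b = 1 := by
    intro k
    rw [hv]
    rw [mlb_sum_prod_bool (fun j t =>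
      (if (j : ℕ) < k then (if t then q else p) else (if t then p else q)))]
    apply Finset.prod_eq_one
    intro j _
    by_cases h : (j:ℕ) < k <;> simp [h] <;> linarith
  set m : ℕ := n - i with hm
  have hpqnn : (0:ℝ) ≤ p * q := mul_nonneg hp0 hq0
  set c : ℝ := 2 * Real.sqrt (p*q) with hc
  have hc0 : 0 ≤ c := by positivity
  have sqrt_prod : ∀ (f : Fin n → ℝ), (∀ j, 0 ≤ f j) →
      Real.sqrt (∏ j, f j) = ∏ j, Real.sqrt (f j) := by
    intro f hf
    have h1 : (∏ j, Real.sqrt (f j))^2 = ∏ j, f j := by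
      rw [← Finset.prod_pow]
      exact Finset.prod_congr rfl fun j _ => Real.sq_sqrt (hf j)
    rw [← h1, Real.sqrt_sq (Finset.prod_nonneg fun j _ => Real.sqrt_nonneg _)]
  have hβdef : ∑ b : Fin n → Bool, Real.sqrt (v i b) * Real.sqrt (v n b) = c ^ m := by
    have hterm : ∀ b : Fin n → Bool, Real.sqrt (v i b) * Real.sqrt (v n b)
        = ∏ j : Fin n, (fun (j : Fin n) (t : Bool) =>
            if (j : ℕ) < i then (if t then q else p) else Real.sqrt (p*q)) j (b j) := by
      intro b
      rw [← Real.sqrt_mul (hvnn i b)]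
      have hprod : v i b * v n b = ∏ j : Fin n,
          ((if (j : ℕ) < i then (if b j then q else p) else (if b j then p else q)) *
           (if b j then q else p)) := by
        rw [hv, ← Finset.prod_mul_distrib]
        apply Finset.prod_congr rfl
        intro j _
        congr 1
        simp [j.isLt]
      rw [hprod, sqrt_prod _ (by intro j; split_ifs <;> nlinarith)]
      apply Finset.prod_congr rfl
      intro j _
      by_cases hj : (j : ℕ) < i
      · simp only [hj, if_true]
        cases hb : b j <;> simp <;>
          [exact Real.sqrt_mul_self hp0; exact Real.sqrt_mul_self hq0]
      · simp only [hj, if_false]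
        cases hb : b j <;> simp [mul_comm]
    rw [Finset.sum_congr rfl (fun b _ => hterm b)]
    rw [mlb_sum_prod_bool (fun (j : Fin n) (t : Bool) =>
      if (j : ℕ) < i then (if t then q else p) else Real.sqrt (p*q))]
    have hfac : ∀ j : Fin n, ((fun (j : Fin n) (t : Bool) =>
        if (j : ℕ) < i then (if t then q else p) else Real.sqrt (p*q)) j true +
        (fun (j : Fin n) (t : Bool) =>
        if (j : ℕ) < i then (if t then q else p) else Real.sqrt (p*q)) j false)
        = (if (j : ℕ) < i then 1 else c) := by
      intro j
      by_cases hj : (j : ℕ) < i <;> simp [hj, hc] <;> ring_nf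
      linarith
    rw [Finset.prod_congr rfl (fun j _ => hfac j)]
    rw [Fin.prod_univ_eq_prod_range (fun j => if j < i then (1:ℝ) else c) n]
    rw [Finset.range_eq_Ico, ← Finset.prod_Ico_consecutive _ (Nat.zero_le i) hi]
    have h1 : ∏ j ∈ Finset.Ico 0 i, (if j < i then (1:ℝ) else c) = 1 := by
      apply Finset.prod_eq_one
      intro j hj
      simp [(Finset.mem_Ico.mp hj).2]
    have h2 : ∏ j ∈ Finset.Ico i n, (if j < i then (1:ℝ) else c) = c ^ m := by
      have hconst : ∀ j ∈ Finset.Ico i n, (if j < i then (1:ℝ) else c) = c := by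
        intro j hj
        simp [Nat.not_lt.mpr (Finset.mem_Ico.mp hj).1]
      rw [Finset.prod_congr rfl hconst, Finset.prod_const, Nat.card_Ico]
    rw [h1, h2, one_mul]
  have hCS : (∑ b : Fin n → Bool, |v i b - v n b|)^2 ≤ 4*(1 - (c^m)^2) := by
    have habs : ∀ b : Fin n → Bool, |v i b - v n b|
        = |Real.sqrt (v i b) - Real.sqrt (v n b)| * (Real.sqrt (v i b) + Real.sqrt (v n b)) := by
      intro b
      have e1 := Real.sq_sqrt (hvnn i b)
      have e2 := Real.sq_sqrt (hvnn n b)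
      have h1 : v i b - v n b
          = (Real.sqrt (v i b) - Real.sqrt (v n b)) * (Real.sqrt (v i b) + Real.sqrt (v n b)) := by
        nlinarith
      rw [h1, abs_mul,
        abs_of_nonneg (show (0:ℝ) ≤ Real.sqrt (v i b) + Real.sqrt (v n b) by positivity)]
    calc (∑ b : Fin n → Bool, |v i b - v n b|)^2
        = (∑ b : Fin n → Bool, |Real.sqrt (v i b) - Real.sqrt (v n b)|
            * (Real.sqrt (v i b) + Real.sqrt (v n b)))^2 := by
          rw [Finset.sum_congr rfl (fun b _ => habs b)]
      _ ≤ (∑ b : Fin n → Bool, |Real.sqrt (v i b) - Real.sqrt (v n b)|^2)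
            * (∑ b : Fin n → Bool, (Real.sqrt (v i b) + Real.sqrt (v n b))^2) :=
          Finset.sum_mul_sq_le_sq_mul_sq _ _ _
      _ = (2 - 2*(c^m)) * (2 + 2*(c^m)) := by
          congr 1
          · have hterm : ∀ b : Fin n → Bool, |Real.sqrt (v i b) - Real.sqrt (v n b)|^2
                = (v i b + v n b) - 2*(Real.sqrt (v i b) * Real.sqrt (v n b)) := by
              intro b
              rw [sq_abs, sub_sq, Real.sq_sqrt (hvnn i b), Real.sq_sqrt (hvnn n b)]
              ring
            rw [Finset.sum_congr rfl (fun b _ => hterm b), Finset.sum_sub_distrib,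
              Finset.sum_add_distrib, hvsum i, hvsum n, ← Finset.mul_sum, hβdef]
            ring
          · have hterm : ∀ b : Fin n → Bool, (Real.sqrt (v i b) + Real.sqrt (v n b))^2
                = (v i b + v n b) + 2*(Real.sqrt (v i b) * Real.sqrt (v n b)) := by
              intro b
              rw [add_sq, Real.sq_sqrt (hvnn i b), Real.sq_sqrt (hvnn n b)]
              ring
            rw [Finset.sum_congr rfl (fun b _ => hterm b), Finset.sum_add_distrib,
              Finset.sum_add_distrib, hvsum i, hvsum n, ← Finset.mul_sum, hβdef]
            ring
      _ = 4*(1 - (c^m)^2) := by ring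
  have hbern : 1 - (c^m)^2 ≤ (m:ℝ) * (4*δ^2) := by
    have hc2 : c^2 = 1 - 4*δ^2 := by
      rw [hc, mul_pow, Real.sq_sqrt hpqnn, hpe, hqe]; ring
    have h1 : (c^m)^2 = (1-4*δ^2)^m := by
      rw [← pow_mul, mul_comm m 2, pow_mul, hc2]
    have h2 : 1 + (m:ℝ) * (-(4*δ^2)) ≤ (1 + (-(4*δ^2)))^m := by
      apply one_add_mul_le_pow
      nlinarith
    have h3 : (1:ℝ) + (-(4*δ^2)) = 1 - 4*δ^2 := by ring
    rw [h1]
    rw [h3] at h2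
    linarith
  have habs_sum : ∑ b : Fin n → Bool, |v i b - v n b| ≤ 4*δ*Real.sqrt (m:ℝ) := by
    have hnn : 0 ≤ ∑ b : Fin n → Bool, |v i b - v n b| :=
      Finset.sum_nonneg fun b _ => abs_nonneg _
    have hsq : (4*δ*Real.sqrt (m:ℝ))^2 = 16*δ^2*(m:ℝ) := by
      rw [mul_pow, mul_pow, Real.sq_sqrt (Nat.cast_nonneg m)]; ring
    have h4 : (∑ b : Fin n → Bool, |v i b - v n b|)^2 ≤ (4*δ*Real.sqrt (m:ℝ))^2 := by
      rw [hsq]; nlinarith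
    nlinarith [mul_nonneg (mul_nonneg (by norm_num : (0:ℝ) ≤ 4) hδ0) (Real.sqrt_nonneg (m:ℝ))]
  have hhalf : ∀ b : Fin n → Bool, (v i b - v n b) * u b
      ≤ (|v i b - v n b| + (v i b - v n b))/2 := by
    intro b
    rcases le_or_gt (v i b - v n b) 0 with h|h
    · have := abs_of_nonpos h; nlinarith [hu0 b, hu1 b]
    · have := abs_of_pos h; nlinarith [hu0 b, hu1 b]
  calc ∑ b : Fin n → Bool, (v i b - v n b) * u b
      ≤ ∑ b : Fin n → Bool, (|v i b - v n b| + (v i b - v n b))/2 :=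
        Finset.sum_le_sum fun b _ => hhalf b
    _ = ((∑ b : Fin n → Bool, |v i b - v n b|)
          + ((∑ b : Fin n → Bool, v i b) - ∑ b : Fin n → Bool, v n b))/2 := by
        rw [← Finset.sum_div, Finset.sum_add_distrib, Finset.sum_sub_distrib]
    _ ≤ 2*δ*Real.sqrt ((n - i : ℕ)) := by
        rw [hvsum i, hvsum n]
        have := habs_sum
        rw [← hm]
        linarith

lemma mlb_key {n i : ℕ} (hi : i ≤ n) (ε : ℕ → ℝ)
    {δ : ℝ} (hδ0 : 0 ≤ δ) (hδ : δ ≤ 1/4)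
    (u : (Fin n → Bool) → ℝ) (hu0 : ∀ b, 0 ≤ u b) (hu1 : ∀ b, u b ≤ 1)
    (hstep : ∀ (K : Fin n), (K : ℕ) < i → ∀ b : Fin n → Bool,
      u b - u (fun j => if j = K then !b j else b j) ≤ ε K) :
    ∑ b : Fin n → Bool,
      ((∏ j, (if b j then 1/2 + δ else 1/2 - δ)) - ∏ j, (if b j then 1/2 - δ else 1/2 + δ)) * u b
      ≤ 2*δ*(∑ j ∈ Finset.range i, ε j) + 2*δ*Real.sqrt ((n - i : ℕ)) := by
  set p : ℝ := 1/2 + δ with hp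
  set q : ℝ := 1/2 - δ with hq
  have hp0 : 0 ≤ p := by rw [hp]; linarith
  have hq0 : 0 ≤ q := by rw [hq]; linarith
  have hpq : p + q = 1 := by rw [hp, hq]; ring
  have hpq2 : p - q = 2*δ := by rw [hp, hq]; ring
  set v : ℕ → (Fin n → Bool) → ℝ := fun k b => ∏ j : Fin n,
      (if (j : ℕ) < k then (if b j then q else p) else (if b j then p else q)) with hv
  have hv0 : ∀ b : Fin n → Bool, v 0 b = ∏ j, (if b j then p else q) := by
    intro b; simp [hv]
  have hvn : ∀ b : Fin n → Bool, v n b = ∏ j, (if b j then q else p) := by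
    intro b; simp only [hv]; exact Finset.prod_congr rfl fun j _ => by simp [j.isLt]
  have key1 := mlb_key_tel hi ε hp0 hq0 hpq hpq2 hδ0 u hstep v hv
  have key2 := mlb_key_cs hi hp0 hq0 hpq hpq2 hδ0 u hu0 hu1 v hv
  have hsplit : ∑ b : Fin n → Bool,
      ((∏ j, (if b j then 1/2 + δ else 1/2 - δ)) - ∏ j, (if b j then 1/2 - δ else 1/2 + δ)) * u b
      = (∑ b : Fin n → Bool, (v 0 b - v i b) * u b)
        + ∑ b : Fin n → Bool, (v i b - v n b) * u b := by
    rw [← Finset.sum_add_distrib]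
    apply Finset.sum_congr rfl
    intro b _
    rw [hv0, hvn]
    ring
  rw [hsplit]
  linarith


section MLBMeas
open MeasureTheory

noncomputable def mlbP (a : ℝ) : Measure ℝ :=
  ENNReal.ofReal a • Measure.dirac (1/2 : ℝ) + ENNReal.ofReal (1-a) • Measure.dirac (-(1:ℝ)/2)

lemma mlbP_apply (a : ℝ) {s : Set ℝ} (hs : MeasurableSet s) :
    mlbP a s = ENNReal.ofReal a * s.indicator 1 (1/2 : ℝ)
      + ENNReal.ofReal (1-a) * s.indicator 1 (-(1:ℝ)/2) := by
  simp [mlbP, Measure.dirac_apply' _ hs]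

lemma mlbP_prob (a : ℝ) (ha0 : 0 ≤ a) (ha1 : a ≤ 1) : IsProbabilityMeasure (mlbP a) := by
  constructor
  rw [mlbP_apply a MeasurableSet.univ]
  simp [← ENNReal.ofReal_add ha0 (by linarith : (0:ℝ) ≤ 1 - a)]

lemma mlbP_Icc (a : ℝ) (ha0 : 0 ≤ a) (ha1 : a ≤ 1) :
    mlbP a (Set.Icc (-(1:ℝ)/2) (1/2)) = 1 := by
  rw [mlbP_apply a measurableSet_Icc]
  have h1 : (1/2 : ℝ) ∈ Set.Icc (-(1:ℝ)/2) (1/2) := by constructor <;> norm_num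
  have h2 : (-(1:ℝ)/2) ∈ Set.Icc (-(1:ℝ)/2) (1/2) := by constructor <;> norm_num
  rw [Set.indicator_of_mem h1, Set.indicator_of_mem h2]
  simp [← ENNReal.ofReal_add ha0 (by linarith : (0:ℝ) ≤ 1 - a)]

lemma mlbP_pair (a : ℝ) (ha0 : 0 ≤ a) (ha1 : a ≤ 1) :
    mlbP a ({-(1:ℝ)/2, 1/2} : Set ℝ) = 1 := by
  rw [mlbP_apply a (by measurability)]
  have h1 : (1/2 : ℝ) ∈ ({-(1:ℝ)/2, 1/2} : Set ℝ) := by right; rfl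
  have h2 : (-(1:ℝ)/2) ∈ ({-(1:ℝ)/2, 1/2} : Set ℝ) := by left; rfl
  rw [Set.indicator_of_mem h1, Set.indicator_of_mem h2]
  simp [← ENNReal.ofReal_add ha0 (by linarith : (0:ℝ) ≤ 1 - a)]

lemma mlbP_single_pos (a : ℝ) : mlbP a ({(1:ℝ)/2} : Set ℝ) = ENNReal.ofReal a := by
  rw [mlbP_apply a (measurableSet_singleton _)]
  have h1 : (1/2 : ℝ) ∈ ({(1:ℝ)/2} : Set ℝ) := rfl
  have h2 : (-(1:ℝ)/2) ∉ ({(1:ℝ)/2} : Set ℝ) := by norm_num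
  rw [Set.indicator_of_mem h1, Set.indicator_of_notMem h2]
  simp

lemma mlbP_single_neg (a : ℝ) : mlbP a ({-(1:ℝ)/2} : Set ℝ) = ENNReal.ofReal (1-a) := by
  rw [mlbP_apply a (measurableSet_singleton _)]
  have h1 : (1/2 : ℝ) ∉ ({-(1:ℝ)/2} : Set ℝ) := by norm_num
  have h2 : (-(1:ℝ)/2) ∈ ({-(1:ℝ)/2} : Set ℝ) := rfl
  rw [Set.indicator_of_mem h2, Set.indicator_of_notMem h1]
  simp

lemma mlbP_integral (a : ℝ) (ha0 : 0 ≤ a) (ha1 : a ≤ 1) :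
    ∫ t, t ∂(mlbP a) = a - 1/2 := by
  have hint : ∀ x : ℝ, Integrable (fun t : ℝ => t) (Measure.dirac x) := by
    intro x
    refine ⟨measurable_id.aestronglyMeasurable, ?_⟩
    simp [HasFiniteIntegral, lintegral_dirac]
  rw [mlbP, integral_add_measure ((hint _).smul_measure ENNReal.ofReal_ne_top)
    ((hint _).smul_measure ENNReal.ofReal_ne_top),
    integral_smul_measure, integral_smul_measure, integral_dirac, integral_dirac,
    ENNReal.toReal_ofReal ha0, ENNReal.toReal_ofReal (by linarith : (0:ℝ) ≤ 1 - a)]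
  simp only [smul_eq_mul]
  ring

lemma mlbP_lintegral {n : ℕ} (a : ℝ) (ha0 : 0 ≤ a) (ha1 : a ≤ 1)
    (F : (Fin n → ℝ) → ENNReal) :
    ∫⁻ x, F x ∂(Measure.pi fun _ : Fin n => mlbP a)
      = ∑ b : Fin n → Bool,
          (∏ j, (if b j then ENNReal.ofReal a else ENNReal.ofReal (1-a)))
            * F (fun j => if b j then 1/2 else -(1:ℝ)/2) := by
  classical
  haveI : IsProbabilityMeasure (mlbP a) := mlbP_prob a ha0 ha1
  set μ : Measure (Fin n → ℝ) := Measure.pi fun _ : Fin n => mlbP a with hμ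
  haveI : IsProbabilityMeasure μ := by rw [hμ]; infer_instance
  set xv : (Fin n → Bool) → (Fin n → ℝ) := fun b j => if b j then 1/2 else -(1:ℝ)/2 with hxv
  set T : Finset (Fin n → ℝ) := Finset.image xv Finset.univ with hT
  have hhalf : (1/2 : ℝ) ≠ -(1:ℝ)/2 := by norm_num
  have hxvinj : ∀ b b' : Fin n → Bool, xv b = xv b' → b = b' := by
    intro b b' h
    funext j
    have h2 := congrFun h j
    cases hb : b j <;> cases hb' : b' j <;> simp [hxv, hb, hb'] at h2 ⊢ <;> norm_num at h2
  have hsingle : ∀ b : Fin n → Bool,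
      μ {xv b} = ∏ j, (if b j then ENNReal.ofReal a else ENNReal.ofReal (1-a)) := by
    intro b
    rw [hμ, ← Set.univ_pi_singleton (xv b), Measure.pi_pi]
    apply Finset.prod_congr rfl
    intro j _
    cases hb : b j
    · simp only [hxv, hb, if_false, Bool.false_eq_true]
      exact mlbP_single_neg a
    · simp only [hxv, hb, if_true]
      exact mlbP_single_pos a
  have hTset : (↑T : Set (Fin n → ℝ)) = Set.pi Set.univ (fun _ => ({-(1:ℝ)/2, 1/2} : Set ℝ)) := by
    ext x
    simp only [hT, Finset.coe_image, Finset.coe_univ, Set.image_univ, Set.mem_range,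
      Set.mem_pi, Set.mem_univ, true_implies, Set.mem_insert_iff, Set.mem_singleton_iff]
    constructor
    · rintro ⟨b, rfl⟩ j
      cases hb : b j <;> simp [hxv, hb]
    · intro hx
      refine ⟨fun j => if x j = 1/2 then true else false, ?_⟩
      funext j
      rcases hx j with h|h
      · have hne : x j ≠ 1/2 := by rw [h]; norm_num
        simp only [hxv, hne, if_false, Bool.false_eq_true]
        exact h.symm
      · simp only [hxv, h, if_true]
  have hTc : μ ((↑T : Set (Fin n → ℝ))ᶜ) = 0 := by
    have h1 : μ (↑T : Set (Fin n → ℝ)) = 1 := by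
      rw [hTset, hμ, Measure.pi_pi]
      simp only [mlbP_pair a ha0 ha1, Finset.prod_const, one_pow]
    rw [measure_compl T.measurableSet (by rw [h1]; exact ENNReal.one_ne_top), h1, measure_univ,
      tsub_self]
  calc ∫⁻ x, F x ∂μ
      = ∫⁻ x in (↑T : Set (Fin n → ℝ)), F x ∂μ + ∫⁻ x in (↑T : Set (Fin n → ℝ))ᶜ, F x ∂μ :=
        (lintegral_add_compl F T.measurableSet).symm
    _ = ∫⁻ x in (↑T : Set (Fin n → ℝ)), F x ∂μ := by
        rw [setLIntegral_measure_zero _ _ hTc, add_zero]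
    _ = ∑ y ∈ T, F y * μ {y} := lintegral_finset T F
    _ = ∑ b : Fin n → Bool, F (xv b) * μ {xv b} :=
        Finset.sum_image (fun b _ b' _ h => hxvinj b b' h)
    _ = ∑ b : Fin n → Bool,
          (∏ j, (if b j then ENNReal.ofReal a else ENNReal.ofReal (1-a))) * F (xv b) := by
        apply Finset.sum_congr rfl
        intro b _
        rw [hsingle b, mul_comm]

end MLBMeas

open MeasureTheory ProbabilityTheory

set_option maxHeartbeats 1000000 in
/-- Lower bound: For `n ≥ 1` and nondecreasing positive privacy levels
`ε` (0-indexed), any Markov kernel `M` from `(Fin n → ℝ)` to `ℝ` satisfying the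
heterogeneous `ε`-DP constraint on datasets in `[-1/2, 1/2]ⁿ` has worst-case
mean-squared error at least `(1/512) * min (H ε) (1/4)`, where
`H ε = max_{0 ≤ i ≤ n} 1 / ((∑_{j<i} ε j)² + (n - i))`. -/
theorem minimax_lower_bound (n : ℕ) (hn : 1 ≤ n) (ε : ℕ → ℝ)
    (hpos : ∀ i < n, 0 < ε i)
    (hmono : ∀ i j : ℕ, i ≤ j → j < n → ε i ≤ ε j)
    (M : Kernel (Fin n → ℝ) ℝ) [IsMarkovKernel M]
    (hDP : ∀ (i : Fin n) (x x' : Fin n → ℝ),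
      (∀ j, x j ∈ Set.Icc (-(1 : ℝ) / 2) (1 / 2)) →
      (∀ j, x' j ∈ Set.Icc (-(1 : ℝ) / 2) (1 / 2)) →
      (∀ j, j ≠ i → x j = x' j) →
      ∀ S : Set ℝ, MeasurableSet S →
        M x S ≤ ENNReal.ofReal (Real.exp (ε i.1)) * M x' S) :
    ENNReal.ofReal ((1 / 512) *
        min ((Finset.range (n + 1)).sup' Finset.nonempty_range_add_one
              (fun i => 1 / ((∑ j ∈ Finset.range i, ε j) ^ 2 + ((n - i : ℕ) : ℝ))))
            (1 / 4))
      ≤ ⨆ (P : Measure ℝ) (_ : IsProbabilityMeasure P)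
          (_ : P (Set.Icc (-(1 : ℝ) / 2) (1 / 2)) = 1),
          ∫⁻ x, (∫⁻ y, ENNReal.ofReal ((y - ∫ t, t ∂P) ^ 2) ∂(M x))
            ∂(Measure.pi fun _ : Fin n => P) := by
  classical
  obtain ⟨i, himem, hH⟩ := Finset.exists_mem_eq_sup' Finset.nonempty_range_add_one
      (fun i : ℕ => 1 / ((∑ j ∈ Finset.range i, ε j) ^ 2 + ((n - i : ℕ) : ℝ)))
  have hi : i ≤ n := Nat.lt_succ_iff.mp (Finset.mem_range.mp himem)
  rw [hH]
  set S : ℝ := ∑ j ∈ Finset.range i, ε j with hSdef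
  set m : ℕ := n - i with hmdef
  have hS0 : 0 ≤ S := Finset.sum_nonneg fun j hj =>
    (hpos j (lt_of_lt_of_le (Finset.mem_range.mp hj) hi)).le
  have hD0 : 0 < S^2 + (m:ℝ) := by
    rcases Nat.eq_zero_or_pos i with h0|h0
    · have hm : m = n := by rw [hmdef, h0]; omega
      have h1 : (0:ℝ) < (m:ℝ) := by
        rw [hm]; exact_mod_cast Nat.lt_of_lt_of_le Nat.zero_lt_one hn
      nlinarith [sq_nonneg S]
    · have hSpos : 0 < S := Finset.sum_pos
        (fun j hj => hpos j (lt_of_lt_of_le (Finset.mem_range.mp hj) hi))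
        ⟨0, Finset.mem_range.mpr h0⟩
      nlinarith [Nat.cast_nonneg (α := ℝ) m]
  set K : ℝ := Real.sqrt (S^2 + (m:ℝ)) with hKdef
  have hK0 : 0 < K := Real.sqrt_pos.mpr hD0
  have hK2 : K^2 = S^2 + (m:ℝ) := Real.sq_sqrt hD0.le
  have h6K : (0:ℝ) < 6*K := by linarith
  set δ : ℝ := min (1/4) (1/(6*K)) with hδdef
  have hδ0 : 0 < δ := lt_min (by norm_num) (one_div_pos.mpr h6K)
  have hδ14 : δ ≤ 1/4 := min_le_left _ _
  have hδK : δ ≤ 1/(6*K) := min_le_right _ _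
  have hsm0 : (0:ℝ) ≤ Real.sqrt (m:ℝ) := Real.sqrt_nonneg _
  have hsm : Real.sqrt ((m:ℝ)) ^ 2 = (m:ℝ) := Real.sq_sqrt (Nat.cast_nonneg m)
  have hbudget : 2*δ*S + 2*δ*Real.sqrt ((m:ℕ):ℝ) ≤ 1/2 := by
    have h1 : (S + Real.sqrt (m:ℝ))^2 ≤ 2*K^2 := by
      rw [hK2]; nlinarith [sq_nonneg (S - Real.sqrt (m:ℝ)), hsm]
    have h2 : 2*(S + Real.sqrt (m:ℝ)) ≤ 3*K := by
      nlinarith [add_nonneg hS0 hsm0, hK0]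
    have h3 : δ*(6*K) ≤ 1 := by
      have := mul_le_mul_of_nonneg_right hδK (le_of_lt h6K)
      rwa [one_div, inv_mul_cancel₀ (ne_of_gt h6K)] at this
    nlinarith [mul_le_mul_of_nonneg_left h2 hδ0.le]
  have hp0 : (0:ℝ) ≤ 1/2 + δ := by linarith
  have hp1 : 1/2 + δ ≤ 1 := by linarith
  have hq0 : (0:ℝ) ≤ 1/2 - δ := by linarith
  have hq1 : 1/2 - δ ≤ 1 := by linarith
  -- the estimator's acceptance probability on binary datasets
  set u : (Fin n → Bool) → ℝ :=
    fun b => (M (fun j => if b j then 1/2 else -(1:ℝ)/2) (Set.Ici (0:ℝ))).toReal with hu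
  have hxmem : ∀ b : Fin n → Bool, ∀ j : Fin n,
      (if b j then (1:ℝ)/2 else -(1:ℝ)/2) ∈ Set.Icc (-(1:ℝ)/2) (1/2) := by
    intro b j
    cases hb : b j <;> simp only [hb, if_true, if_false, Bool.false_eq_true] <;>
      constructor <;> norm_num
  have hMle1 : ∀ (x : Fin n → ℝ) (s : Set ℝ), M x s ≤ 1 := fun x s => prob_le_one
  have hu0 : ∀ b, 0 ≤ u b := fun b => ENNReal.toReal_nonneg
  have hu1 : ∀ b, u b ≤ 1 := by
    intro b
    rw [hu]
    simpa using ENNReal.toReal_mono ENNReal.one_ne_top (hMle1 _ _)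
  have hstep : ∀ (Kk : Fin n), (Kk : ℕ) < i → ∀ b : Fin n → Bool,
      u b - u (fun j => if j = Kk then !b j else b j) ≤ ε Kk := by
    intro Kk hKi b
    set b' : Fin n → Bool := fun j => if j = Kk then !b j else b j with hb'
    have hDP1 := hDP Kk (fun j => if b j then 1/2 else -(1:ℝ)/2)
      (fun j => if b' j then 1/2 else -(1:ℝ)/2) (hxmem b) (hxmem b')
      (fun j hj => by simp [hb', hj]) (Set.Ici 0) measurableSet_Ici
    have hre : u b ≤ Real.exp (ε Kk.1) * u b' := by
      have hne : ENNReal.ofReal (Real.exp (ε Kk.1))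
          * M (fun j => if b' j then 1/2 else -(1:ℝ)/2) (Set.Ici 0) ≠ ⊤ :=
        ENNReal.mul_ne_top ENNReal.ofReal_ne_top (measure_ne_top _ _)
      have h2 := ENNReal.toReal_mono hne hDP1
      rwa [ENNReal.toReal_mul, ENNReal.toReal_ofReal (Real.exp_nonneg _)] at h2
    have hexp1 : 1 - Real.exp (-(ε Kk.1)) ≤ ε Kk.1 := by
      have := Real.add_one_le_exp (-(ε Kk.1)); linarith
    have hexp2 : Real.exp (-(ε Kk.1)) ≤ 1 := by
      rw [show (1:ℝ) = Real.exp 0 from (Real.exp_zero).symm]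
      exact Real.exp_le_exp.mpr (by simpa using (hpos _ Kk.isLt).le)
    have hub' : Real.exp (-(ε Kk.1)) * u b ≤ u b' := by
      calc Real.exp (-(ε Kk.1)) * u b
          ≤ Real.exp (-(ε Kk.1)) * (Real.exp (ε Kk.1) * u b') :=
            mul_le_mul_of_nonneg_left hre (Real.exp_nonneg _)
        _ = u b' := by rw [← mul_assoc, ← Real.exp_add]; simp
    nlinarith [hu0 b, hu1 b, Real.exp_pos (-(ε Kk.1)),
      mul_nonneg (by linarith : (0:ℝ) ≤ 1 - Real.exp (-(ε Kk.1)))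
        (by linarith [hu1 b] : (0:ℝ) ≤ 1 - u b)]
  -- key combinatorial bound
  have key := mlb_key hi ε hδ0.le hδ14 u hu0 hu1 hstep
  rw [← hSdef, ← hmdef] at key
  -- the crucial real inequality
  have hreal : (1:ℝ)/2 ≤ ∑ b : Fin n → Bool,
      ((∏ j, (if b j then 1/2 + δ else 1/2 - δ)) * (1 - u b)
        + (∏ j, (if b j then 1/2 - δ else 1/2 + δ)) * u b) := by
    have hwpsum : ∑ b : Fin n → Bool, ∏ j, (if b j then 1/2 + δ else 1/2 - δ) = 1 := by
      rw [mlb_sum_prod_bool (fun j t => if t then 1/2 + δ else 1/2 - δ)]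
      apply Finset.prod_eq_one
      intro j _
      norm_num
    have h1 : ∑ b : Fin n → Bool,
        ((∏ j, (if b j then 1/2 + δ else 1/2 - δ)) * (1 - u b)
          + (∏ j, (if b j then 1/2 - δ else 1/2 + δ)) * u b)
        = (∑ b : Fin n → Bool, ∏ j, (if b j then 1/2 + δ else 1/2 - δ))
          - ∑ b : Fin n → Bool,
            ((∏ j, (if b j then 1/2 + δ else 1/2 - δ))
              - ∏ j, (if b j then 1/2 - δ else 1/2 + δ)) * u b := by
      rw [← Finset.sum_sub_distrib]
      apply Finset.sum_congr rfl
      intro b _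
      ring
    rw [h1, hwpsum]
    linarith [key, hbudget]
  -- lower bounds on the inner integrals
  have hmeasP : Measurable fun y : ℝ => ENNReal.ofReal ((y - δ)^2) :=
    ((measurable_id.sub_const δ).pow_const 2).ennreal_ofReal
  have hmeasQ : Measurable fun y : ℝ => ENNReal.ofReal ((y - (-δ))^2) :=
    ((measurable_id.sub_const (-δ)).pow_const 2).ennreal_ofReal
  have hinnerP : ∀ b : Fin n → Bool,
      ENNReal.ofReal (δ^2) * M (fun j => if b j then 1/2 else -(1:ℝ)/2) (Set.Iio 0)
        ≤ ∫⁻ y, ENNReal.ofReal ((y - δ)^2)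
            ∂(M (fun j => if b j then 1/2 else -(1:ℝ)/2)) := by
    intro b
    calc ENNReal.ofReal (δ^2) * M (fun j => if b j then 1/2 else -(1:ℝ)/2) (Set.Iio 0)
        = ∫⁻ y in Set.Iio 0, ENNReal.ofReal (δ^2)
            ∂(M (fun j => if b j then 1/2 else -(1:ℝ)/2)) := (setLIntegral_const _ _).symm
      _ ≤ ∫⁻ y in Set.Iio 0, ENNReal.ofReal ((y - δ)^2)
            ∂(M (fun j => if b j then 1/2 else -(1:ℝ)/2)) := by
          apply setLIntegral_mono hmeasP
          intro y hy
          have hy0 : y < 0 := hy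
          apply ENNReal.ofReal_le_ofReal
          nlinarith [mul_nonneg (neg_nonneg.mpr hy0.le) (by linarith : (0:ℝ) ≤ 2*δ - y)]
      _ ≤ _ := setLIntegral_le_lintegral _ _
  have hinnerQ : ∀ b : Fin n → Bool,
      ENNReal.ofReal (δ^2) * M (fun j => if b j then 1/2 else -(1:ℝ)/2) (Set.Ici 0)
        ≤ ∫⁻ y, ENNReal.ofReal ((y - (-δ))^2)
            ∂(M (fun j => if b j then 1/2 else -(1:ℝ)/2)) := by
    intro b
    calc ENNReal.ofReal (δ^2) * M (fun j => if b j then 1/2 else -(1:ℝ)/2) (Set.Ici 0)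
        = ∫⁻ y in Set.Ici 0, ENNReal.ofReal (δ^2)
            ∂(M (fun j => if b j then 1/2 else -(1:ℝ)/2)) := (setLIntegral_const _ _).symm
      _ ≤ ∫⁻ y in Set.Ici 0, ENNReal.ofReal ((y - (-δ))^2)
            ∂(M (fun j => if b j then 1/2 else -(1:ℝ)/2)) := by
          apply setLIntegral_mono hmeasQ
          intro y hy
          have hy0 : (0:ℝ) ≤ y := hy
          apply ENNReal.ofReal_le_ofReal
          nlinarith [mul_nonneg hy0 (by linarith : (0:ℝ) ≤ y + 2*δ)]
      _ ≤ _ := setLIntegral_le_lintegral _ _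
  -- risks as sums
  have hRp : ∑ b : Fin n → Bool,
      (∏ j, (if b j then ENNReal.ofReal (1/2 + δ) else ENNReal.ofReal (1/2 - δ)))
        * (ENNReal.ofReal (δ^2)
            * M (fun j => if b j then 1/2 else -(1:ℝ)/2) (Set.Iio 0))
      ≤ ∫⁻ x, (∫⁻ y, ENNReal.ofReal ((y - δ)^2) ∂(M x))
          ∂(Measure.pi fun _ : Fin n => mlbP (1/2 + δ)) := by
    rw [mlbP_lintegral (1/2 + δ) hp0 hp1 (fun x => ∫⁻ y, ENNReal.ofReal ((y - δ)^2) ∂(M x))]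
    simp only [show (1:ℝ) - (1/2 + δ) = 1/2 - δ from by ring]
    exact Finset.sum_le_sum fun b _ => mul_le_mul_right (hinnerP b) _
  have hRq : ∑ b : Fin n → Bool,
      (∏ j, (if b j then ENNReal.ofReal (1/2 - δ) else ENNReal.ofReal (1/2 + δ)))
        * (ENNReal.ofReal (δ^2)
            * M (fun j => if b j then 1/2 else -(1:ℝ)/2) (Set.Ici 0))
      ≤ ∫⁻ x, (∫⁻ y, ENNReal.ofReal ((y - (-δ))^2) ∂(M x))
          ∂(Measure.pi fun _ : Fin n => mlbP (1/2 - δ)) := by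
    rw [mlbP_lintegral (1/2 - δ) hq0 hq1
      (fun x => ∫⁻ y, ENNReal.ofReal ((y - (-δ))^2) ∂(M x))]
    simp only [show (1:ℝ) - (1/2 - δ) = 1/2 + δ from by ring]
    exact Finset.sum_le_sum fun b _ => mul_le_mul_right (hinnerQ b) _
  -- half bound on Z
  have hZhalf : ENNReal.ofReal (1/2) ≤ ∑ b : Fin n → Bool,
      ((∏ j, (if b j then ENNReal.ofReal (1/2 + δ) else ENNReal.ofReal (1/2 - δ)))
          * M (fun j => if b j then 1/2 else -(1:ℝ)/2) (Set.Iio 0)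
        + (∏ j, (if b j then ENNReal.ofReal (1/2 - δ) else ENNReal.ofReal (1/2 + δ)))
          * M (fun j => if b j then 1/2 else -(1:ℝ)/2) (Set.Ici 0)) := by
    apply ENNReal.ofReal_le_of_le_toReal
    have hWpne : ∀ b : Fin n → Bool,
        (∏ j, (if b j then ENNReal.ofReal (1/2 + δ) else ENNReal.ofReal (1/2 - δ))) ≠ ⊤ := by
      intro b
      refine (ENNReal.prod_lt_top fun j _ => ?_).ne
      cases b j <;> simp [ENNReal.ofReal_lt_top]
    have hWqne : ∀ b : Fin n → Bool,
        (∏ j, (if b j then ENNReal.ofReal (1/2 - δ) else ENNReal.ofReal (1/2 + δ))) ≠ ⊤ := by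
      intro b
      refine (ENNReal.prod_lt_top fun j _ => ?_).ne
      cases b j <;> simp [ENNReal.ofReal_lt_top]
    have htne : ∀ b : Fin n → Bool,
        ((∏ j, (if b j then ENNReal.ofReal (1/2 + δ) else ENNReal.ofReal (1/2 - δ)))
            * M (fun j => if b j then 1/2 else -(1:ℝ)/2) (Set.Iio 0)
          + (∏ j, (if b j then ENNReal.ofReal (1/2 - δ) else ENNReal.ofReal (1/2 + δ)))
            * M (fun j => if b j then 1/2 else -(1:ℝ)/2) (Set.Ici 0)) ≠ ⊤ := by
      intro b
      exact ENNReal.add_ne_top.mpr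
        ⟨ENNReal.mul_ne_top (hWpne b) (measure_ne_top _ _),
         ENNReal.mul_ne_top (hWqne b) (measure_ne_top _ _)⟩
    rw [ENNReal.toReal_sum (fun b _ => htne b)]
    have hterm : ∀ b : Fin n → Bool,
        ((∏ j, (if b j then ENNReal.ofReal (1/2 + δ) else ENNReal.ofReal (1/2 - δ)))
            * M (fun j => if b j then 1/2 else -(1:ℝ)/2) (Set.Iio 0)
          + (∏ j, (if b j then ENNReal.ofReal (1/2 - δ) else ENNReal.ofReal (1/2 + δ)))
            * M (fun j => if b j then 1/2 else -(1:ℝ)/2) (Set.Ici 0)).toReal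
        = (∏ j, (if b j then 1/2 + δ else 1/2 - δ)) * (1 - u b)
          + (∏ j, (if b j then 1/2 - δ else 1/2 + δ)) * u b := by
      intro b
      rw [ENNReal.toReal_add (ENNReal.mul_ne_top (hWpne b) (measure_ne_top _ _))
        (ENNReal.mul_ne_top (hWqne b) (measure_ne_top _ _)),
        ENNReal.toReal_mul, ENNReal.toReal_mul, ENNReal.toReal_prod, ENNReal.toReal_prod]
      have hIio : (M (fun j => if b j then 1/2 else -(1:ℝ)/2) (Set.Iio 0)).toReal
          = 1 - u b := by
        rw [show Set.Iio (0:ℝ) = (Set.Ici 0)ᶜ from (Set.compl_Ici (a := (0:ℝ))).symm,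
          prob_compl_eq_one_sub measurableSet_Ici,
          ENNReal.toReal_sub_of_le (hMle1 _ _) ENNReal.one_ne_top]
        simp [hu]
      rw [hIio]
      congr 2
      · refine Finset.prod_congr rfl fun j _ => ?_
        cases b j
        · simp only [if_false, Bool.false_eq_true]; exact ENNReal.toReal_ofReal hq0
        · simp only [if_true]; exact ENNReal.toReal_ofReal hp0
      · refine Finset.prod_congr rfl fun j _ => ?_
        cases b j
        · simp only [if_false, Bool.false_eq_true]; exact ENNReal.toReal_ofReal hp0
        · simp only [if_true]; exact ENNReal.toReal_ofReal hq0
    rw [Finset.sum_congr rfl (fun b _ => hterm b)]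
    exact hreal
  -- the two sup bounds
  haveI hProbp : IsProbabilityMeasure (mlbP (1/2 + δ)) := mlbP_prob _ hp0 hp1
  haveI hProbq : IsProbabilityMeasure (mlbP (1/2 - δ)) := mlbP_prob _ hq0 hq1
  have hmeanp : ∫ t, t ∂(mlbP (1/2 + δ)) = δ := by
    rw [mlbP_integral _ hp0 hp1]; ring
  have hmeanq : ∫ t, t ∂(mlbP (1/2 - δ)) = -δ := by
    rw [mlbP_integral _ hq0 hq1]; ring
  have hsupP : (∫⁻ x, (∫⁻ y, ENNReal.ofReal ((y - δ)^2) ∂(M x))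
      ∂(Measure.pi fun _ : Fin n => mlbP (1/2 + δ)))
      ≤ ⨆ (P : Measure ℝ) (_ : IsProbabilityMeasure P)
          (_ : P (Set.Icc (-(1 : ℝ) / 2) (1 / 2)) = 1),
          ∫⁻ x, (∫⁻ y, ENNReal.ofReal ((y - ∫ t, t ∂P) ^ 2) ∂(M x))
            ∂(Measure.pi fun _ : Fin n => P) := by
    refine le_iSup_of_le (mlbP (1/2 + δ)) ?_
    refine le_iSup_of_le hProbp ?_
    refine le_iSup_of_le (mlbP_Icc _ hp0 hp1) ?_
    rw [hmeanp]
  have hsupQ : (∫⁻ x, (∫⁻ y, ENNReal.ofReal ((y - (-δ))^2) ∂(M x))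
      ∂(Measure.pi fun _ : Fin n => mlbP (1/2 - δ)))
      ≤ ⨆ (P : Measure ℝ) (_ : IsProbabilityMeasure P)
          (_ : P (Set.Icc (-(1 : ℝ) / 2) (1 / 2)) = 1),
          ∫⁻ x, (∫⁻ y, ENNReal.ofReal ((y - ∫ t, t ∂P) ^ 2) ∂(M x))
            ∂(Measure.pi fun _ : Fin n => P) := by
    refine le_iSup_of_le (mlbP (1/2 - δ)) ?_
    refine le_iSup_of_le hProbq ?_
    refine le_iSup_of_le (mlbP_Icc _ hq0 hq1) ?_
    rw [hmeanq]
  -- chain it together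
  have hchain : ENNReal.ofReal (δ^2/2)
      ≤ (⨆ (P : Measure ℝ) (_ : IsProbabilityMeasure P)
          (_ : P (Set.Icc (-(1 : ℝ) / 2) (1 / 2)) = 1),
          ∫⁻ x, (∫⁻ y, ENNReal.ofReal ((y - ∫ t, t ∂P) ^ 2) ∂(M x))
            ∂(Measure.pi fun _ : Fin n => P))
        + (⨆ (P : Measure ℝ) (_ : IsProbabilityMeasure P)
          (_ : P (Set.Icc (-(1 : ℝ) / 2) (1 / 2)) = 1),
          ∫⁻ x, (∫⁻ y, ENNReal.ofReal ((y - ∫ t, t ∂P) ^ 2) ∂(M x))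
            ∂(Measure.pi fun _ : Fin n => P)) := by
    calc ENNReal.ofReal (δ^2/2)
        = ENNReal.ofReal (δ^2) * ENNReal.ofReal (1/2) := by
          rw [← ENNReal.ofReal_mul (sq_nonneg δ), show δ^2 * (1/2) = δ^2/2 from by ring]
      _ ≤ ENNReal.ofReal (δ^2) * ∑ b : Fin n → Bool,
            ((∏ j, (if b j then ENNReal.ofReal (1/2 + δ) else ENNReal.ofReal (1/2 - δ)))
                * M (fun j => if b j then 1/2 else -(1:ℝ)/2) (Set.Iio 0)
              + (∏ j, (if b j then ENNReal.ofReal (1/2 - δ) else ENNReal.ofReal (1/2 + δ)))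
                * M (fun j => if b j then 1/2 else -(1:ℝ)/2) (Set.Ici 0)) :=
          mul_le_mul_right hZhalf _
      _ = (∑ b : Fin n → Bool,
            (∏ j, (if b j then ENNReal.ofReal (1/2 + δ) else ENNReal.ofReal (1/2 - δ)))
              * (ENNReal.ofReal (δ^2)
                  * M (fun j => if b j then 1/2 else -(1:ℝ)/2) (Set.Iio 0)))
          + ∑ b : Fin n → Bool,
            (∏ j, (if b j then ENNReal.ofReal (1/2 - δ) else ENNReal.ofReal (1/2 + δ)))
              * (ENNReal.ofReal (δ^2)
                  * M (fun j => if b j then 1/2 else -(1:ℝ)/2) (Set.Ici 0)) := by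
          rw [Finset.mul_sum, ← Finset.sum_add_distrib]
          apply Finset.sum_congr rfl
          intro b _
          ring
      _ ≤ _ := add_le_add (le_trans hRp hsupP) (le_trans hRq hsupQ)
  have hfinal : ENNReal.ofReal (δ^2/4)
      ≤ ⨆ (P : Measure ℝ) (_ : IsProbabilityMeasure P)
          (_ : P (Set.Icc (-(1 : ℝ) / 2) (1 / 2)) = 1),
          ∫⁻ x, (∫⁻ y, ENNReal.ofReal ((y - ∫ t, t ∂P) ^ 2) ∂(M x))
            ∂(Measure.pi fun _ : Fin n => P) := by
    have h24 : ENNReal.ofReal (δ^2/2) = 2 * ENNReal.ofReal (δ^2/4) := by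
      rw [show δ^2/2 = δ^2/4 + δ^2/4 from by ring,
        ENNReal.ofReal_add (by positivity) (by positivity), two_mul]
    rw [h24, ← two_mul] at hchain
    exact (ENNReal.mul_le_mul_iff_right (by norm_num) (by norm_num)).mp hchain
  refine le_trans (ENNReal.ofReal_le_ofReal ?_) hfinal
  -- final arithmetic
  have hH0 : (0:ℝ) < 1/(S^2 + (m:ℝ)) := by positivity
  rcases min_cases (1/4 : ℝ) (1/(6*K)) with ⟨hmin, hc1⟩|⟨hmin, hc2⟩
  · have hδval : δ = 1/4 := by rw [hδdef, hmin]
    have hminle : min (1/(S^2 + (m:ℝ))) (1/4 : ℝ) ≤ 1/4 := min_le_right _ _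
    rw [hδval]
    nlinarith [hminle]
  · have hδval : δ = 1/(6*K) := by rw [hδdef, hmin]
    have hδ2 : δ^2 = 1/(36*(S^2 + (m:ℝ))) := by
      rw [hδval, div_pow, mul_pow, hK2]
      norm_num
    have hminle : min (1/(S^2 + (m:ℝ))) (1/4 : ℝ) ≤ 1/(S^2 + (m:ℝ)) := min_le_left _ _
    rw [hδ2]
    have h1 : (1:ℝ)/512 * min (1/(S^2 + (m:ℝ))) (1/4 : ℝ)
        ≤ (1:ℝ)/512 * (1/(S^2 + (m:ℝ))) := by nlinarith
    have h2 : (1:ℝ)/512 * (1/(S^2 + (m:ℝ))) ≤ (1/(36*(S^2 + (m:ℝ))))/4 := by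
      rw [div_mul_div_comm, div_div, one_mul]
      exact one_div_le_one_div_of_le (by positivity) (by nlinarith)
    calc (1:ℝ)/512 * min (1/(S^2 + (m:ℝ))) (1/4 : ℝ)
        ≤ (1:ℝ)/512 * (1/(S^2 + (m:ℝ))) := h1
      _ ≤ (1/(36*(S^2 + (m:ℝ))))/4 := h2
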